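/- Let H be a finite-dimensional real inner product space, B a set of unit-norm atoms that is centrally symmetric and spanning, k > 1 an integer, A the k-simple subset relative to B, and suppose (H, A, ‖·‖_B) is a compressed sensing space with bound L > 0. Let Φ : H → ℝ^m be a linear map having the (k, α, β)-generalized-weaken-RIP for distortions α, β > 0 with α ≤ β. Fix λ > 0, σ > 0, and ρ with √((β² − α²)/(α²(k−1))) < ρ < 1/(2L). Let x♮ ∈ H and w ∈ ℝ^m satisfy ‖Φᵀw‖_⋄ ≤ λσ, where Φᵀ is the adjoint of Φ. Then any minimizer x* of ‖x‖_B subject to ‖Φᵀ(Φx − (Φx♮ + w))‖_⋄ ≤ λσ satisfies, for every a ∈ A, ‖x* − x♮‖ ≤ C₄ ‖x♮ − a‖_B + C₅ σ, where C₄ = (1/(2ρ) − L)^{−1}, C₅ = 2λ/(α̃²ρ), and α̃² = α² − (β² − α²)/(ρ²(k−1)). -/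

import Mathlib

open scoped BigOperators RealInnerProductSpace

set_option maxHeartbeats 1000000

/-- The atom norm induced by a set of atoms `B`. -/
noncomputable def atomNorm {H : Type*} [AddCommGroup H] [Module ℝ H] (B : Set H) (x : H) : ℝ :=
  sInf { r : ℝ | ∃ (S : Finset H) (σ : H → ℝ), ↑S ⊆ B ∧ (∀ b ∈ S, 0 ≤ σ b) ∧
    x = ∑ b ∈ S, σ b • b ∧ r = ∑ b ∈ S, σ b }

/-- The `k`-simple subset relative to a set of atoms `B`. -/
def simpleSet {H : Type*} [AddCommGroup H] [Module ℝ H] (B : Set H) (k : ℕ) : Set H :=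
  { x | ∃ (σ : Fin k → ℝ) (b : Fin k → H),
      (∀ i, 0 ≤ σ i) ∧ (∀ i, b i ∈ B) ∧ x = ∑ i, σ i • b i }

/-- `B` spans `H` via finite nonnegative combinations. -/
def Spans {H : Type*} [AddCommGroup H] [Module ℝ H] (B : Set H) : Prop :=
  ∀ x : H, ∃ (S : Finset H) (σ : H → ℝ), ↑S ⊆ B ∧ (∀ b ∈ S, 0 ≤ σ b) ∧
    x = ∑ b ∈ S, σ b • b

/-- `(H, A, ‖·‖_B)` is a compressed sensing space with bound `L`. -/
def IsCSSpace {H : Type*} [NormedAddCommGroup H] [InnerProductSpace ℝ H]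
    (B A : Set H) (L : ℝ) : Prop :=
  (0 : H) ∈ A ∧ ∀ a ∈ A, ∀ v : H, ∃ z₁ z₂ : H, v = z₁ + z₂ ∧
    atomNorm B (a + z₁) = atomNorm B a + atomNorm B z₁ ∧ atomNorm B z₂ ≤ L * ‖v‖

/-- The dual norm of the atom norm. -/
noncomputable def dualNorm {H : Type*} [NormedAddCommGroup H] [InnerProductSpace ℝ H]
    (B : Set H) (y : H) : ℝ :=
  sSup { r : ℝ | ∃ x : H, atomNorm B x ≤ 1 ∧ r = ⟪x, y⟫ }

section atom
variable {H : Type*} [NormedAddCommGroup H] [InnerProductSpace ℝ H] (B : Set H)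

def atomSet (x : H) : Set ℝ :=
  { r : ℝ | ∃ (S : Finset H) (σ : H → ℝ), ↑S ⊆ B ∧ (∀ b ∈ S, 0 ≤ σ b) ∧
    x = ∑ b ∈ S, σ b • b ∧ r = ∑ b ∈ S, σ b }

lemma atomNorm_eq (x : H) : atomNorm B x = sInf (atomSet B x) := rfl

variable {B}

lemma atomSet_nonempty (hBspan : Spans B) (x : H) : (atomSet B x).Nonempty := by
  obtain ⟨S, σ, h1, h2, h3⟩ := hBspan x
  exact ⟨∑ b ∈ S, σ b, S, σ, h1, h2, h3, rfl⟩

lemma atomSet_nonneg {x : H} {r : ℝ} (hr : r ∈ atomSet B x) : 0 ≤ r := by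
  obtain ⟨S, σ, h1, h2, h3, rfl⟩ := hr
  exact Finset.sum_nonneg h2

lemma atomSet_bddBelow (x : H) : BddBelow (atomSet B x) :=
  ⟨0, fun r hr => atomSet_nonneg hr⟩

lemma norm_le_of_mem_atomSet (hBunit : ∀ b ∈ B, ‖b‖ = 1) {x : H} {r : ℝ}
    (hr : r ∈ atomSet B x) : ‖x‖ ≤ r := by
  obtain ⟨S, σ, h1, h2, h3, rfl⟩ := hr
  calc ‖x‖ ≤ ∑ b ∈ S, ‖σ b • b‖ := h3 ▸ norm_sum_le _ _
    _ = ∑ b ∈ S, σ b := by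
        refine Finset.sum_congr rfl fun b hb => ?_
        rw [norm_smul, hBunit b (h1 hb), mul_one, Real.norm_eq_abs,
          abs_of_nonneg (h2 b hb)]

lemma atomNorm_nonneg (hBspan : Spans B) (x : H) : 0 ≤ atomNorm B x :=
  le_csInf (atomSet_nonempty hBspan x) fun _ hr => atomSet_nonneg hr

lemma norm_le_atomNorm (hBspan : Spans B) (hBunit : ∀ b ∈ B, ‖b‖ = 1) (x : H) :
    ‖x‖ ≤ atomNorm B x :=
  le_csInf (atomSet_nonempty hBspan x) fun _ hr => norm_le_of_mem_atomSet hBunit hr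

lemma zero_mem_atomSet : (0 : ℝ) ∈ atomSet B (0 : H) :=
  ⟨∅, 0, by simp⟩

lemma atomNorm_zero_le : atomNorm B (0 : H) ≤ 0 :=
  csInf_le (atomSet_bddBelow 0) zero_mem_atomSet

lemma add_mem_atomSet {x y : H} {r s : ℝ} (hr : r ∈ atomSet B x) (hs : s ∈ atomSet B y) :
    r + s ∈ atomSet B (x + y) := by
  obtain ⟨S₁, σ₁, hS₁, hσ₁, hx, rfl⟩ := hr
  obtain ⟨S₂, σ₂, hS₂, hσ₂, hy, rfl⟩ := hs
  classical
  refine ⟨S₁ ∪ S₂, fun b => (if b ∈ S₁ then σ₁ b else 0) + (if b ∈ S₂ then σ₂ b else 0),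
    ?_, ?_, ?_, ?_⟩
  · rw [Finset.coe_union]; exact Set.union_subset hS₁ hS₂
  · intro b _
    dsimp only
    split_ifs with p1 p2 p2
    · exact add_nonneg (hσ₁ b p1) (hσ₂ b p2)
    · simpa using hσ₁ b p1
    · simpa using hσ₂ b p2
    · simp
  · simp only [add_smul, Finset.sum_add_distrib, ite_smul, zero_smul,
      Finset.sum_ite_mem, Finset.union_inter_cancel_left, Finset.union_inter_cancel_right]
    rw [hx, hy]
  · simp only [Finset.sum_add_distrib, Finset.sum_ite_mem,
      Finset.union_inter_cancel_left, Finset.union_inter_cancel_right]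

lemma atomNorm_add_le (hBspan : Spans B) (x y : H) :
    atomNorm B (x + y) ≤ atomNorm B x + atomNorm B y := by
  rw [atomNorm_eq, atomNorm_eq, atomNorm_eq]
  have h1 : ∀ r ∈ atomSet B x, sInf (atomSet B (x + y)) - r ≤ sInf (atomSet B y) := by
    intro r hr
    refine le_csInf (atomSet_nonempty hBspan y) fun s hs => ?_
    have := csInf_le (atomSet_bddBelow (x + y)) (add_mem_atomSet hr hs)
    linarith
  have := le_csInf (atomSet_nonempty hBspan x)
    (fun r hr => by linarith [h1 r hr] : ∀ r ∈ atomSet B x,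
      sInf (atomSet B (x + y)) - sInf (atomSet B y) ≤ r)
  linarith

lemma neg_mem_atomSet (hBsym : ∀ b ∈ B, -b ∈ B) {x : H} {r : ℝ} (hr : r ∈ atomSet B x) :
    r ∈ atomSet B (-x) := by
  obtain ⟨S, σ, hS, hσ, hx, rfl⟩ := hr
  classical
  refine ⟨S.image (fun b => -b), fun b => σ (-b), ?_, ?_, ?_, ?_⟩
  · intro b hb
    simp only [Finset.coe_image, Set.mem_image, Finset.mem_coe] at hb
    obtain ⟨a, ha, rfl⟩ := hb
    exact hBsym a (hS ha)
  · intro b hb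
    simp only [Finset.mem_image] at hb
    obtain ⟨a, ha, rfl⟩ := hb
    simpa using hσ a ha
  · rw [Finset.sum_image (fun a _ b _ h => neg_injective h)]
    simp only [neg_neg, smul_neg]
    rw [Finset.sum_neg_distrib, hx]
  · rw [Finset.sum_image (fun a _ b _ h => neg_injective h)]
    simp only [neg_neg]

lemma atomNorm_neg (hBsym : ∀ b ∈ B, -b ∈ B) (hBspan : Spans B) (x : H) :
    atomNorm B (-x) = atomNorm B x := by
  have key : ∀ y : H, atomNorm B (-y) ≤ atomNorm B y := fun y =>
    le_csInf (atomSet_nonempty hBspan y) fun r hr =>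
      csInf_le (atomSet_bddBelow _) (neg_mem_atomSet hBsym hr)
  have := key (-x)
  rw [neg_neg] at this
  exact le_antisymm (key x) this

lemma smul_mem_atomSet {c : ℝ} (hc : 0 ≤ c) {x : H} {r : ℝ} (hr : r ∈ atomSet B x) :
    c * r ∈ atomSet B (c • x) := by
  obtain ⟨S, σ, hS, hσ, hx, rfl⟩ := hr
  refine ⟨S, fun b => c * σ b, hS, fun b hb => mul_nonneg hc (hσ b hb), ?_, ?_⟩
  · rw [hx, Finset.smul_sum]
    exact Finset.sum_congr rfl fun b _ => by simp [smul_smul]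
  · rw [Finset.mul_sum]

lemma atomNorm_smul_le (hBspan : Spans B) {c : ℝ} (hc : 0 ≤ c) (x : H) :
    atomNorm B (c • x) ≤ c * atomNorm B x := by
  rcases eq_or_lt_of_le hc with rfl | hc
  · simpa using atomNorm_zero_le
  have key : atomNorm B (c • x) / c ≤ atomNorm B x := by
    refine le_csInf (atomSet_nonempty hBspan x) fun r hr => ?_
    rw [div_le_iff₀ hc]
    calc atomNorm B (c • x) ≤ c * r := csInf_le (atomSet_bddBelow _) (smul_mem_atomSet hc.le hr)
      _ = r * c := mul_comm _ _
  calc atomNorm B (c • x) = (atomNorm B (c • x) / c) * c := by field_simp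
    _ ≤ atomNorm B x * c := mul_le_mul_of_nonneg_right key hc.le
    _ = c * atomNorm B x := mul_comm _ _

end atom

section dual
variable {H : Type*} [NormedAddCommGroup H] [InnerProductSpace ℝ H] {B : Set H}

def dualSet (B : Set H) (y : H) : Set ℝ := { r : ℝ | ∃ x : H, atomNorm B x ≤ 1 ∧ r = ⟪x, y⟫ }

lemma dualNorm_eq (y : H) : dualNorm B y = sSup (dualSet B y) := rfl

lemma zero_mem_dualSet (y : H) : (0 : ℝ) ∈ dualSet B y :=
  ⟨0, atomNorm_zero_le.trans zero_le_one, by simp⟩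

lemma dualSet_bddAbove (hBspan : Spans B) (hBunit : ∀ b ∈ B, ‖b‖ = 1) (y : H) :
    BddAbove (dualSet B y) := by
  refine ⟨‖y‖, fun r hr => ?_⟩
  obtain ⟨x, hx, rfl⟩ := hr
  calc ⟪x, y⟫ ≤ ‖x‖ * ‖y‖ := real_inner_le_norm x y
    _ ≤ 1 * ‖y‖ := by
        have := (norm_le_atomNorm hBspan hBunit x).trans hx
        exact mul_le_mul_of_nonneg_right this (norm_nonneg y)
    _ = ‖y‖ := one_mul _

lemma dualNorm_nonneg (hBspan : Spans B) (hBunit : ∀ b ∈ B, ‖b‖ = 1) (y : H) :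
    0 ≤ dualNorm B y :=
  le_csSup (dualSet_bddAbove hBspan hBunit y) (zero_mem_dualSet y)

lemma inner_le_atomNorm_mul_dualNorm (hBspan : Spans B) (hBunit : ∀ b ∈ B, ‖b‖ = 1)
    (v y : H) : ⟪v, y⟫ ≤ atomNorm B v * dualNorm B y := by
  set c := atomNorm B v with hc
  have hc0 : 0 ≤ c := atomNorm_nonneg hBspan v
  rcases eq_or_lt_of_le hc0 with hceq | hcpos
  · have hv : v = 0 := by
      have := norm_le_atomNorm hBspan hBunit v
      rw [← hc, ← hceq] at this
      exact norm_le_zero_iff.mp this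
    simp only [hv, inner_zero_left]
    rw [← hceq, zero_mul]
  · have hx : atomNorm B (c⁻¹ • v) ≤ 1 := by
      calc atomNorm B (c⁻¹ • v) ≤ c⁻¹ * c := atomNorm_smul_le hBspan (inv_nonneg.mpr hc0) v
        _ = 1 := inv_mul_cancel₀ (ne_of_gt hcpos)
    have hmem : ⟪c⁻¹ • v, y⟫ ∈ dualSet B y := ⟨_, hx, rfl⟩
    have hle : ⟪c⁻¹ • v, y⟫ ≤ dualNorm B y :=
      le_csSup (dualSet_bddAbove hBspan hBunit y) hmem
    rw [real_inner_smul_left] at hle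
    calc ⟪v, y⟫ = c * (c⁻¹ * ⟪v, y⟫) := by field_simp
      _ ≤ c * dualNorm B y := mul_le_mul_of_nonneg_left hle hc0
      _ = atomNorm B v * dualNorm B y := rfl

lemma dualNorm_neg (hBsym : ∀ b ∈ B, -b ∈ B) (hBspan : Spans B) (y : H) :
    dualNorm B (-y) = dualNorm B y := by
  have hset : ∀ z : H, dualSet B (-z) ⊆ dualSet B z := by
    rintro z r ⟨x, hx, rfl⟩
    refine ⟨-x, ?_, ?_⟩
    · rw [atomNorm_neg hBsym hBspan]; exact hx
    · rw [inner_neg_left, inner_neg_right]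
  have h1 : dualSet B (-y) = dualSet B y := by
    refine Set.Subset.antisymm (hset y) ?_
    have := hset (-y)
    rwa [neg_neg] at this
  rw [dualNorm_eq, dualNorm_eq, h1]

lemma dualNorm_add_le (hBspan : Spans B) (hBunit : ∀ b ∈ B, ‖b‖ = 1) (y z : H) :
    dualNorm B (y + z) ≤ dualNorm B y + dualNorm B z := by
  refine csSup_le ⟨0, zero_mem_dualSet _⟩ ?_
  rintro r ⟨x, hx, rfl⟩
  rw [inner_add_right]
  exact add_le_add
    (le_csSup (dualSet_bddAbove hBspan hBunit y) ⟨x, hx, rfl⟩)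
    (le_csSup (dualSet_bddAbove hBspan hBunit z) ⟨x, hx, rfl⟩)

end dual

section comb
variable {ι : Type*} [Fintype ι]

lemma sum_prod_eq {k : ℕ} (h : Fin k → ι → ℝ) :
    ∑ g : Fin k → ι, ∏ l, h l (g l) = ∏ l, ∑ i, h l i :=
  (Fintype.prod_sum h).symm

lemma marg1 {k : ℕ} (p : ι → ℝ) (hp1 : ∑ i, p i = 1) (c : ι → ℝ) (j : Fin k) :
    ∑ g : Fin k → ι, (∏ l, p (g l)) * c (g j) = ∑ i, p i * c i := by
  have step : ∀ g : Fin k → ι,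
      (∏ l, p (g l)) * c (g j) = ∏ l, (p (g l) * if l = j then c (g l) else 1) := by
    intro g
    rw [Finset.prod_mul_distrib, Finset.prod_ite_eq' Finset.univ j (fun l => c (g l))]
    simp
  calc ∑ g : Fin k → ι, (∏ l, p (g l)) * c (g j)
      = ∑ g : Fin k → ι, ∏ l, (p (g l) * if l = j then c (g l) else 1) := by
        exact Finset.sum_congr rfl fun g _ => step g
    _ = ∏ l, ∑ i, (p i * if l = j then c i else 1) :=
        sum_prod_eq (fun l i => p i * if l = j then c i else 1)
    _ = ∏ l, (if l = j then ∑ i, p i * c i else 1) := by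
        refine Finset.prod_congr rfl fun l _ => ?_
        by_cases hl : l = j
        · simp [hl]
        · simp [hl, hp1]
    _ = ∑ i, p i * c i := by
        rw [Finset.prod_ite_eq' Finset.univ j (fun _ => ∑ i, p i * c i)]
        simp

lemma marg2 {k : ℕ} (p : ι → ℝ) (hp1 : ∑ i, p i = 1) (c d : ι → ℝ) {j j' : Fin k}
    (hjj : j ≠ j') :
    ∑ g : Fin k → ι, (∏ l, p (g l)) * (c (g j) * d (g j'))
      = (∑ i, p i * c i) * (∑ i, p i * d i) := by
  have step : ∀ g : Fin k → ι,
      (∏ l, p (g l)) * (c (g j) * d (g j'))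
        = ∏ l, (p (g l) * ((if l = j then c (g l) else 1) * (if l = j' then d (g l) else 1))) := by
    intro g
    rw [Finset.prod_mul_distrib, Finset.prod_mul_distrib,
      Finset.prod_ite_eq' Finset.univ j (fun l => c (g l)),
      Finset.prod_ite_eq' Finset.univ j' (fun l => d (g l))]
    simp
  calc ∑ g : Fin k → ι, (∏ l, p (g l)) * (c (g j) * d (g j'))
      = ∑ g : Fin k → ι, ∏ l,
          (p (g l) * ((if l = j then c (g l) else 1) * (if l = j' then d (g l) else 1))) :=
        Finset.sum_congr rfl fun g _ => step g
    _ = ∏ l, ∑ i, (p i * ((if l = j then c i else 1) * (if l = j' then d i else 1))) := by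
        have h2 := sum_prod_eq (fun l i => p i * ((if l = j then c i else 1) * (if l = j' then d i else 1)))
        beta_reduce at h2
        exact h2
    _ = ∏ l, ((if l = j then ∑ i, p i * c i else 1) * (if l = j' then ∑ i, p i * d i else 1)) := by
        refine Finset.prod_congr rfl fun l _ => ?_
        by_cases hl : l = j
        · subst hl
          simp [hjj]
        · by_cases hl' : l = j'
          · subst hl'
            simp [hl]
          · simp [hl, hl', hp1]
    _ = (∑ i, p i * c i) * (∑ i, p i * d i) := by
        rw [Finset.prod_mul_distrib,
          Finset.prod_ite_eq' Finset.univ j (fun _ => ∑ i, p i * c i),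
          Finset.prod_ite_eq' Finset.univ j' (fun _ => ∑ i, p i * d i)]
        simp

lemma expect_norm_sq {E : Type*} [NormedAddCommGroup E] [InnerProductSpace ℝ E]
    [FiniteDimensional ℝ E] (k : ℕ) (p : ι → ℝ) (hp1 : ∑ i, p i = 1) (f : ι → E) :
    ∑ g : Fin k → ι, (∏ l, p (g l)) * ‖∑ j, f (g j)‖ ^ 2
      = (k : ℝ) * (∑ i, p i * ‖f i‖ ^ 2)
        + ((k : ℝ) * ((k : ℝ) - 1)) * ‖∑ i, p i • f i‖ ^ 2 := by
  set D : ℝ := ∑ i, p i * ‖f i‖ ^ 2 with hD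
  set O : ℝ := ‖∑ i, p i • f i‖ ^ 2 with hO
  set m : E := ∑ i, p i • f i with hm
  have key : ∀ j j' : Fin k,
      (∑ g : Fin k → ι, (∏ l, p (g l)) * ⟪f (g j), f (g j')⟫) = if j = j' then D else O := by
    intro j j'
    by_cases h : j = j'
    · subst h
      rw [if_pos rfl, hD]
      have : ∀ g : Fin k → ι, ⟪f (g j), f (g j)⟫ = ‖f (g j)‖ ^ 2 :=
        fun g => real_inner_self_eq_norm_sq _
      calc ∑ g : Fin k → ι, (∏ l, p (g l)) * ⟪f (g j), f (g j)⟫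
          = ∑ g : Fin k → ι, (∏ l, p (g l)) * ‖f (g j)‖ ^ 2 :=
            Finset.sum_congr rfl fun g _ => by rw [this g]
        _ = ∑ i, p i * ‖f i‖ ^ 2 := marg1 p hp1 (fun i => ‖f i‖ ^ 2) j
    · rw [if_neg h, hO]
      set o := stdOrthonormalBasis ℝ E with ho
      have expand : ∀ g : Fin k → ι, ⟪f (g j), f (g j')⟫
          = ∑ e, ⟪f (g j), o e⟫ * ⟪o e, f (g j')⟫ :=
        fun g => (o.sum_inner_mul_inner _ _).symm
      calc ∑ g : Fin k → ι, (∏ l, p (g l)) * ⟪f (g j), f (g j')⟫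
          = ∑ g : Fin k → ι, ∑ e, (∏ l, p (g l)) * (⟪f (g j), o e⟫ * ⟪o e, f (g j')⟫) := by
            refine Finset.sum_congr rfl fun g _ => ?_
            rw [expand g, Finset.mul_sum]
        _ = ∑ e, ∑ g : Fin k → ι, (∏ l, p (g l)) * (⟪f (g j), o e⟫ * ⟪o e, f (g j')⟫) :=
            Finset.sum_comm
        _ = ∑ e, (∑ i, p i * ⟪f i, o e⟫) * (∑ i, p i * ⟪o e, f i⟫) :=
            Finset.sum_congr rfl fun e _ =>
              marg2 p hp1 (fun i => ⟪f i, o e⟫) (fun i => ⟪o e, f i⟫) h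
        _ = ∑ e, ⟪m, o e⟫ * ⟪o e, m⟫ := by
            refine Finset.sum_congr rfl fun e _ => ?_
            congr 1
            · rw [hm, sum_inner]
              exact Finset.sum_congr rfl fun i _ => (real_inner_smul_left _ _ _).symm
            · rw [hm, inner_sum]
              exact Finset.sum_congr rfl fun i _ => by rw [real_inner_smul_right]
        _ = ‖m‖ ^ 2 := by rw [o.sum_inner_mul_inner m m, real_inner_self_eq_norm_sq]
  have expand2 : ∀ g : Fin k → ι, ‖∑ j, f (g j)‖ ^ 2
      = ∑ j : Fin k, ∑ j' : Fin k, ⟪f (g j), f (g j')⟫ := by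
    intro g
    rw [← real_inner_self_eq_norm_sq, sum_inner]
    exact Finset.sum_congr rfl fun j _ => inner_sum _ _ _
  calc ∑ g : Fin k → ι, (∏ l, p (g l)) * ‖∑ j, f (g j)‖ ^ 2
      = ∑ g : Fin k → ι, ∑ j : Fin k, ∑ j' : Fin k, (∏ l, p (g l)) * ⟪f (g j), f (g j')⟫ := by
        refine Finset.sum_congr rfl fun g _ => ?_
        rw [expand2 g, Finset.mul_sum]
        exact Finset.sum_congr rfl fun j _ => Finset.mul_sum _ _ _
    _ = ∑ j : Fin k, ∑ j' : Fin k, ∑ g : Fin k → ι, (∏ l, p (g l)) * ⟪f (g j), f (g j')⟫ := by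
        rw [Finset.sum_comm]
        exact Finset.sum_congr rfl fun j _ => Finset.sum_comm
    _ = ∑ j : Fin k, ∑ j' : Fin k, (if j = j' then D else O) :=
        Finset.sum_congr rfl fun j _ => Finset.sum_congr rfl fun j' _ => key j j'
    _ = (k : ℝ) * D + ((k : ℝ) * ((k : ℝ) - 1)) * O := by
        have inner_sum' : ∀ j : Fin k, ∑ j' : Fin k, (if j = j' then D else O)
            = (k : ℝ) * O + (D - O) := by
          intro j
          have : ∀ j' : Fin k, (if j = j' then D else O)
              = O + (if j = j' then D - O else 0) := by
            intro j'
            by_cases h : j = j' <;> simp [h]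
          rw [Finset.sum_congr rfl fun j' _ => this j', Finset.sum_add_distrib,
            Finset.sum_const, Finset.sum_ite_eq]
          simp [mul_comm]
        rw [Finset.sum_congr rfl fun j _ => inner_sum' j, Finset.sum_const]
        simp only [Finset.card_univ, Fintype.card_fin, nsmul_eq_mul]
        ring

end comb

section keyA
variable {H : Type*} [NormedAddCommGroup H] [InnerProductSpace ℝ H] [FiniteDimensional ℝ H]
  {m : ℕ} {B : Set H}

lemma norm_smul_sq {E : Type*} [NormedAddCommGroup E] [Module ℝ E] [NormSMulClass ℝ E]
    {c : ℝ} (hc : 0 ≤ c) (x : E) : ‖c • x‖ ^ 2 = c ^ 2 * ‖x‖ ^ 2 := by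
  rw [norm_smul, Real.norm_eq_abs, abs_of_nonneg hc, mul_pow]

lemma keyA (hBunit : ∀ b ∈ B, ‖b‖ = 1) {k : ℕ} (hk : 1 < k) {α β : ℝ} (hα : 0 < α)
    (hβ0 : 0 ≤ β)
    (Φ : H →ₗ[ℝ] EuclideanSpace ℝ (Fin m))
    (hRIPa : ∀ u ∈ simpleSet B k, α * ‖u‖ ≤ ‖Φ u‖) (hRIPb : ∀ b ∈ B, ‖Φ b‖ ≤ β)
    {ι : Type*} [Fintype ι] (bb : ι → H) (hbb : ∀ i, bb i ∈ B) (σ : ι → ℝ)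
    (hσ : ∀ i, 0 ≤ σ i) :
    α ^ 2 * ((∑ i, σ i) ^ 2 + ((k : ℝ) - 1) * ‖∑ i, σ i • bb i‖ ^ 2)
      ≤ β ^ 2 * (∑ i, σ i) ^ 2 + ((k : ℝ) - 1) * ‖Φ (∑ i, σ i • bb i)‖ ^ 2 := by
  set t : ℝ := ∑ i, σ i with htdef
  set v : H := ∑ i, σ i • bb i with hvdef
  have ht0 : 0 ≤ t := Finset.sum_nonneg fun i _ => hσ i
  rcases eq_or_lt_of_le ht0 with ht | ht
  · have hz : ∀ i ∈ Finset.univ, σ i = 0 :=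
      (Finset.sum_eq_zero_iff_of_nonneg (fun i _ => hσ i)).mp ht.symm
    have hv : v = 0 := by
      rw [hvdef]
      exact Finset.sum_eq_zero fun i hi => by rw [hz i hi, zero_smul]
    rw [hv, ← ht]
    simp
  · have hkpos : (0 : ℝ) < (k : ℝ) := by positivity
    set p : ι → ℝ := fun i => σ i / t with hpdef
    have hp0 : ∀ i, 0 ≤ p i := fun i => div_nonneg (hσ i) ht0
    have hp1 : ∑ i, p i = 1 := by
      rw [hpdef]
      simp only
      rw [← Finset.sum_div, ← htdef, div_self (ne_of_gt ht)]
    have hpbb : ∑ i, p i • bb i = t⁻¹ • v := by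
      rw [hvdef, Finset.smul_sum]
      refine Finset.sum_congr rfl fun i _ => ?_
      rw [hpdef]
      simp only
      rw [smul_smul, div_eq_inv_mul]
    have hpΦbb : ∑ i, p i • Φ (bb i) = t⁻¹ • Φ v := by
      rw [← map_smul, ← hpbb, map_sum]
      exact Finset.sum_congr rfl fun i _ => (map_smul Φ (p i) (bb i)).symm
    set u : (Fin k → ι) → H := fun g => ∑ j, (t / (k : ℝ)) • bb (g j) with hudef
    have hu : ∀ g, u g ∈ simpleSet B k := by
      intro g
      exact ⟨fun _ => t / (k : ℝ), fun j => bb (g j),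
        fun _ => div_nonneg ht0 hkpos.le, fun j => hbb (g j), rfl⟩
    have husmul : ∀ g, u g = (t / (k : ℝ)) • ∑ j, bb (g j) := by
      intro g
      rw [hudef]
      simp only
      rw [Finset.smul_sum]
    have huΦ : ∀ g, Φ (u g) = (t / (k : ℝ)) • ∑ j, Φ (bb (g j)) := by
      intro g
      rw [husmul g, map_smul, map_sum]
    have pointwise : ∀ g, α ^ 2 * ‖u g‖ ^ 2 ≤ ‖Φ (u g)‖ ^ 2 := by
      intro g
      have h1 := hRIPa (u g) (hu g)
      have h2 := mul_self_le_mul_self (mul_nonneg hα.le (norm_nonneg (u g))) h1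
      nlinarith [h2]
    set W : (Fin k → ι) → ℝ := fun g => ∏ l, p (g l) with hWdef
    have hW0 : ∀ g, 0 ≤ W g := fun g => Finset.prod_nonneg fun l _ => hp0 (g l)
    have sum_le : ∑ g : Fin k → ι, W g * (α ^ 2 * ‖u g‖ ^ 2)
        ≤ ∑ g : Fin k → ι, W g * ‖Φ (u g)‖ ^ 2 :=
      Finset.sum_le_sum fun g _ => mul_le_mul_of_nonneg_left (pointwise g) (hW0 g)
    have c2 : (0 : ℝ) ≤ (t / (k : ℝ)) := div_nonneg ht0 hkpos.le
    have lhs_eq : ∑ g : Fin k → ι, W g * (α ^ 2 * ‖u g‖ ^ 2)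
        = α ^ 2 * (t / (k : ℝ)) ^ 2 *
          ((k : ℝ) + ((k : ℝ) * ((k : ℝ) - 1)) * ‖t⁻¹ • v‖ ^ 2) := by
      have e1 : ∀ g, W g * (α ^ 2 * ‖u g‖ ^ 2)
          = (α ^ 2 * (t / (k : ℝ)) ^ 2) * (W g * ‖∑ j, bb (g j)‖ ^ 2) := by
        intro g
        rw [husmul g, norm_smul_sq c2]
        ring
      rw [Finset.sum_congr rfl fun g _ => e1 g, ← Finset.mul_sum]
      rw [expect_norm_sq k p hp1 bb]
      have : ∑ i, p i * ‖bb i‖ ^ 2 = 1 := by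
        rw [← hp1]
        exact Finset.sum_congr rfl fun i _ => by rw [hBunit (bb i) (hbb i), one_pow, mul_one]
      rw [this, hpbb, mul_one]
    have rhs_le : ∑ g : Fin k → ι, W g * ‖Φ (u g)‖ ^ 2
        ≤ (t / (k : ℝ)) ^ 2 *
          ((k : ℝ) * β ^ 2 + ((k : ℝ) * ((k : ℝ) - 1)) * ‖t⁻¹ • Φ v‖ ^ 2) := by
      have e2 : ∀ g, W g * ‖Φ (u g)‖ ^ 2
          = (t / (k : ℝ)) ^ 2 * (W g * ‖∑ j, Φ (bb (g j))‖ ^ 2) := by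
        intro g
        rw [huΦ g, norm_smul_sq c2]
        ring
      rw [Finset.sum_congr rfl fun g _ => e2 g, ← Finset.mul_sum]
      rw [expect_norm_sq k p hp1 (fun i => Φ (bb i))]
      have hb2 : ∑ i, p i * ‖Φ (bb i)‖ ^ 2 ≤ β ^ 2 := by
        calc ∑ i, p i * ‖Φ (bb i)‖ ^ 2 ≤ ∑ i, p i * β ^ 2 := by
              refine Finset.sum_le_sum fun i _ => ?_
              have := hRIPb (bb i) (hbb i)
              have hsq : ‖Φ (bb i)‖ ^ 2 ≤ β ^ 2 := by nlinarith [norm_nonneg (Φ (bb i))]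
              exact mul_le_mul_of_nonneg_left hsq (hp0 i)
          _ = β ^ 2 := by rw [← Finset.sum_mul, hp1, one_mul]
      rw [hpΦbb]
      have hfac : (0 : ℝ) ≤ (t / (k : ℝ)) ^ 2 := sq_nonneg _
      exact mul_le_mul_of_nonneg_left (add_le_add_left
        (mul_le_mul_of_nonneg_left hb2 hkpos.le)
        (((k : ℝ) * ((k : ℝ) - 1)) * ‖t⁻¹ • Φ v‖ ^ 2)) hfac
    have hinv : ‖t⁻¹ • v‖ ^ 2 = (t⁻¹) ^ 2 * ‖v‖ ^ 2 := norm_smul_sq (inv_nonneg.mpr ht0) v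
    have hinv2 : ‖t⁻¹ • Φ v‖ ^ 2 = (t⁻¹) ^ 2 * ‖Φ v‖ ^ 2 :=
      norm_smul_sq (inv_nonneg.mpr ht0) (Φ v)
    have main := le_trans (le_of_eq lhs_eq.symm) (le_trans sum_le rhs_le)
    rw [hinv, hinv2] at main
    have htne : t ≠ 0 := ne_of_gt ht
    have hkne : (k : ℝ) ≠ 0 := ne_of_gt hkpos
    have expand : α ^ 2 * (t / (k : ℝ)) ^ 2 *
          ((k : ℝ) + ((k : ℝ) * ((k : ℝ) - 1)) * ((t⁻¹) ^ 2 * ‖v‖ ^ 2))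
        = α ^ 2 * (t ^ 2 + ((k : ℝ) - 1) * ‖v‖ ^ 2) / (k : ℝ) := by
      field_simp
    have expand2 : (t / (k : ℝ)) ^ 2 *
          ((k : ℝ) * β ^ 2 + ((k : ℝ) * ((k : ℝ) - 1)) * ((t⁻¹) ^ 2 * ‖Φ v‖ ^ 2))
        = (β ^ 2 * t ^ 2 + ((k : ℝ) - 1) * ‖Φ v‖ ^ 2) / (k : ℝ) := by
      field_simp
    rw [expand, expand2, div_le_div_iff_of_pos_right hkpos] at main
    exact main

lemma keyB (hBspan : Spans B) (hBunit : ∀ b ∈ B, ‖b‖ = 1) {k : ℕ} (hk : 1 < k)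
    {α β : ℝ} (hα : 0 < α) (hβ0 : 0 ≤ β) (hβα : 0 ≤ β ^ 2 - α ^ 2)
    (Φ : H →ₗ[ℝ] EuclideanSpace ℝ (Fin m))
    (hRIPa : ∀ u ∈ simpleSet B k, α * ‖u‖ ≤ ‖Φ u‖) (hRIPb : ∀ b ∈ B, ‖Φ b‖ ≤ β)
    (v : H) :
    α ^ 2 * ((k : ℝ) - 1) * ‖v‖ ^ 2
      ≤ ((k : ℝ) - 1) * ‖Φ v‖ ^ 2 + (β ^ 2 - α ^ 2) * (atomNorm B v) ^ 2 := by
  have step : ∀ r ∈ atomSet B v,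
      α ^ 2 * ((k : ℝ) - 1) * ‖v‖ ^ 2
        ≤ ((k : ℝ) - 1) * ‖Φ v‖ ^ 2 + (β ^ 2 - α ^ 2) * r ^ 2 := by
    rintro r ⟨S, σS, hS, hσS, hveq, rfl⟩
    have := keyA hBunit hk hα hβ0 Φ hRIPa hRIPb (fun i : ↥S => (i : H))
      (fun i => hS i.2) (fun i : ↥S => σS ↑i) (fun i => hσS ↑i i.2)
    rw [Finset.sum_coe_sort S σS] at this
    have hsum : ∑ i : ↥S, σS ↑i • (i : H) = v := by
      rw [Finset.sum_coe_sort S (fun b => σS b • b), ← hveq]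
    rw [hsum] at this
    nlinarith [this]
  set X : ℝ := α ^ 2 * ((k : ℝ) - 1) * ‖v‖ ^ 2 - ((k : ℝ) - 1) * ‖Φ v‖ ^ 2 with hX
  set c : ℝ := β ^ 2 - α ^ 2 with hc
  set nB : ℝ := atomNorm B v with hnB
  by_contra hcon
  push_neg at hcon
  have hcon' : c * nB ^ 2 < X := by rw [hX]; linarith
  rcases eq_or_lt_of_le hβα with hc0 | hc0
  · have hc' : c = 0 := hc0.symm
    obtain ⟨r, hr⟩ := atomSet_nonempty hBspan v
    have h5 := step r hr
    rw [hc'] at hcon' h5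
    rw [hX] at hcon'
    simp only [zero_mul] at hcon' h5
    linarith
  · have hnB0 : 0 ≤ nB := atomNorm_nonneg hBspan v
    have hXpos : 0 < X := lt_of_le_of_lt (by positivity) hcon'
    have hlt : nB < Real.sqrt (X / c) := by
      rw [show nB = Real.sqrt (nB ^ 2) from (Real.sqrt_sq hnB0).symm]
      apply Real.sqrt_lt_sqrt (sq_nonneg _)
      rw [lt_div_iff₀ hc0]
      linarith [hcon']
    have hsInf : sInf (atomSet B v) < Real.sqrt (X / c) := by
      rw [← atomNorm_eq]; exact hlt
    obtain ⟨r, hrmem, hrlt⟩ := exists_lt_of_csInf_lt (atomSet_nonempty hBspan v) hsInf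
    have hr0 : 0 ≤ r := atomSet_nonneg hrmem
    have hr2 : r ^ 2 < X / c := by
      have h7 : 0 ≤ X / c := (div_pos hXpos hc0).le
      nlinarith [Real.sq_sqrt h7, Real.sqrt_nonneg (X / c), hrlt, hr0]
    have h5 := step r hrmem
    have h6 : r ^ 2 * c < X := (lt_div_iff₀ hc0).mp hr2
    rw [hX] at h6
    nlinarith [h5, h6]

end keyA

/-- Weaken-RIP implies stable and robust recovery via the Dantzig selector. -/
theorem weakenRIP_stable_robust_dantzig
    {H : Type*} [NormedAddCommGroup H] [InnerProductSpace ℝ H] [FiniteDimensional ℝ H]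
    {m : ℕ} (B : Set H)
    (hBsym : ∀ b ∈ B, -b ∈ B) (hBspan : Spans B) (hBunit : ∀ b ∈ B, ‖b‖ = 1)
    (k : ℕ) (hk : 1 < k) (L : ℝ) (hL : 0 < L)
    (hCS : IsCSSpace B (simpleSet B k) L)
    (α β : ℝ) (hα : 0 < α) (hβ : 0 < β) (hαβ : α ≤ β)
    (Φ : H →ₗ[ℝ] EuclideanSpace ℝ (Fin m))
    (hRIPa : ∀ u ∈ simpleSet B k, α * ‖u‖ ≤ ‖Φ u‖)
    (hRIPb : ∀ b ∈ B, ‖Φ b‖ ≤ β)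
    (lam σ ρ : ℝ) (hlam : 0 < lam) (hσ : 0 < σ)
    (hρ1 : Real.sqrt ((β ^ 2 - α ^ 2) / (α ^ 2 * ((k : ℝ) - 1))) < ρ)
    (hρ2 : ρ < 1 / (2 * L))
    (xnat : H) (w : EuclideanSpace ℝ (Fin m))
    (hw : dualNorm B ((LinearMap.adjoint Φ) w) ≤ lam * σ)
    (xstar : H)
    (hfeas : dualNorm B ((LinearMap.adjoint Φ) (Φ xstar - (Φ xnat + w))) ≤ lam * σ)
    (hmin : ∀ x : H,
      dualNorm B ((LinearMap.adjoint Φ) (Φ x - (Φ xnat + w))) ≤ lam * σ →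
      atomNorm B xstar ≤ atomNorm B x) :
    ∀ a ∈ simpleSet B k,
      ‖xstar - xnat‖ ≤
        (1 / (2 * ρ) - L)⁻¹ * atomNorm B (xnat - a)
        + (2 * lam /
            ((α ^ 2 - (β ^ 2 - α ^ 2) / (ρ ^ 2 * ((k : ℝ) - 1))) * ρ)) * σ := by
  intro a ha
  set h : H := xstar - xnat with hhdef
  have hρ0 : 0 < ρ := lt_of_le_of_lt (Real.sqrt_nonneg _) hρ1
  have hk1 : (1 : ℝ) < (k : ℝ) := by exact_mod_cast hk
  have hkm1 : (0 : ℝ) < (k : ℝ) - 1 := by linarith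
  have hβα : (0 : ℝ) ≤ β ^ 2 - α ^ 2 := by nlinarith
  have hαt : 0 < α ^ 2 - (β ^ 2 - α ^ 2) / (ρ ^ 2 * ((k : ℝ) - 1)) := by
    have h0 : 0 ≤ (β ^ 2 - α ^ 2) / (α ^ 2 * ((k : ℝ) - 1)) := by positivity
    have hsq : (β ^ 2 - α ^ 2) / (α ^ 2 * ((k : ℝ) - 1)) < ρ ^ 2 := by
      have h1 := pow_lt_pow_left₀ hρ1 (Real.sqrt_nonneg _) two_ne_zero
      rwa [Real.sq_sqrt h0] at h1
    rw [div_lt_iff₀ (by positivity)] at hsq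
    rw [sub_pos, div_lt_iff₀ (by positivity)]
    nlinarith [hsq]
  have h2Lρ : 2 * ρ * L < 1 := by
    rw [lt_div_iff₀ (by positivity)] at hρ2
    nlinarith [hρ2]
  have hC4pos : 0 < 1 / (2 * ρ) - L := by
    have heq : 1 / (2 * ρ) - L = (1 - 2 * ρ * L) / (2 * ρ) := by
      rw [eq_div_iff (by positivity : (2:ℝ) * ρ ≠ 0)]
      field_simp
    rw [heq]
    have hnum : 0 < 1 - 2 * ρ * L := by linarith
    positivity
  have hC5σ : 0 ≤ 2 * lam /
      ((α ^ 2 - (β ^ 2 - α ^ 2) / (ρ ^ 2 * ((k : ℝ) - 1))) * ρ) * σ := by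
    have hp : 0 < (α ^ 2 - (β ^ 2 - α ^ 2) / (ρ ^ 2 * ((k : ℝ) - 1))) * ρ :=
      mul_pos hαt hρ0
    positivity
  -- Step 1
  have hfeas0 : dualNorm B ((LinearMap.adjoint Φ) (Φ xnat - (Φ xnat + w))) ≤ lam * σ := by
    have e : Φ xnat - (Φ xnat + w) = -w := by abel
    rw [e, map_neg, dualNorm_neg hBsym hBspan]
    exact hw
  have hminle : atomNorm B xstar ≤ atomNorm B xnat := hmin xnat hfeas0
  -- Step 2
  have htube : dualNorm B ((LinearMap.adjoint Φ) (Φ h)) ≤ 2 * (lam * σ) := by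
    have hsplit : (LinearMap.adjoint Φ) (Φ h)
        = (LinearMap.adjoint Φ) (Φ xstar - (Φ xnat + w)) + (LinearMap.adjoint Φ) w := by
      rw [← map_add]
      congr 1
      rw [hhdef, map_sub]
      abel
    rw [hsplit]
    calc dualNorm B ((LinearMap.adjoint Φ) (Φ xstar - (Φ xnat + w)) + (LinearMap.adjoint Φ) w)
        ≤ dualNorm B ((LinearMap.adjoint Φ) (Φ xstar - (Φ xnat + w)))
          + dualNorm B ((LinearMap.adjoint Φ) w) := dualNorm_add_le hBspan hBunit _ _
      _ ≤ lam * σ + lam * σ := add_le_add hfeas hw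
      _ = 2 * (lam * σ) := by ring
  -- Step 3
  have hΦh : ‖Φ h‖ ^ 2 ≤ atomNorm B h * (2 * (lam * σ)) := by
    have e1 : ⟪h, (LinearMap.adjoint Φ) (Φ h)⟫ = ‖Φ h‖ ^ 2 := by
      rw [LinearMap.adjoint_inner_right, real_inner_self_eq_norm_sq]
    calc ‖Φ h‖ ^ 2 = ⟪h, (LinearMap.adjoint Φ) (Φ h)⟫ := e1.symm
      _ ≤ atomNorm B h * dualNorm B ((LinearMap.adjoint Φ) (Φ h)) :=
          inner_le_atomNorm_mul_dualNorm hBspan hBunit _ _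
      _ ≤ atomNorm B h * (2 * (lam * σ)) :=
          mul_le_mul_of_nonneg_left htube (atomNorm_nonneg hBspan h)
  -- Step 4 : cone constraint
  obtain ⟨z₁, z₂, hz, hz1, hz2⟩ := hCS.2 a ha h
  set E : ℝ := atomNorm B (xnat - a) with hEdef
  have hE0 : 0 ≤ E := atomNorm_nonneg hBspan _
  have hxa : atomNorm B xnat ≤ E + atomNorm B a := by
    have e : (xnat - a) + a = xnat := by abel
    calc atomNorm B xnat = atomNorm B ((xnat - a) + a) := by rw [e]
      _ ≤ E + atomNorm B a := atomNorm_add_le hBspan _ _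
  have hxs : xstar = z₁ + z₂ + xnat := sub_eq_iff_eq_add.mp hz
  have hdecomp : a + z₁ = xstar + -z₂ + (a - xnat) := by
    rw [hxs]; abel
  have h4 : atomNorm B (a + z₁) ≤ atomNorm B xstar + atomNorm B z₂ + E := by
    calc atomNorm B (a + z₁) = atomNorm B (xstar + -z₂ + (a - xnat)) := by rw [hdecomp]
      _ ≤ atomNorm B (xstar + -z₂) + atomNorm B (a - xnat) := atomNorm_add_le hBspan _ _
      _ ≤ atomNorm B xstar + atomNorm B (-z₂) + atomNorm B (a - xnat) :=
          add_le_add_left (atomNorm_add_le hBspan _ _) _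
      _ = atomNorm B xstar + atomNorm B z₂ + E := by
          rw [atomNorm_neg hBsym hBspan, show a - xnat = -(xnat - a) by abel,
            atomNorm_neg hBsym hBspan]
  have hz1le : atomNorm B z₁ ≤ 2 * E + atomNorm B z₂ := by
    have h5 : atomNorm B a + atomNorm B z₁ ≤ atomNorm B xstar + atomNorm B z₂ + E := by
      rw [← hz1]; exact h4
    linarith [hminle, hxa]
  have hcone : atomNorm B h ≤ 2 * E + 2 * L * ‖h‖ := by
    have h6 : atomNorm B h ≤ atomNorm B z₁ + atomNorm B z₂ := by
      calc atomNorm B h = atomNorm B (z₁ + z₂) := by rw [hz]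
        _ ≤ atomNorm B z₁ + atomNorm B z₂ := atomNorm_add_le hBspan _ _
    linarith [hz2]
  -- Step 5
  set nB : ℝ := atomNorm B h with hnBdef
  have hnB0 : 0 ≤ nB := atomNorm_nonneg hBspan h
  rcases le_total ‖h‖ (ρ * nB) with hcase | hcase
  · -- Case 1
    have h7 : ‖h‖ ≤ ρ * (2 * E + 2 * L * ‖h‖) :=
      hcase.trans (mul_le_mul_of_nonneg_left hcone hρ0.le)
    have h8 : (1 - 2 * ρ * L) * ‖h‖ ≤ 2 * ρ * E := by nlinarith only [h7]
    have h9 : ‖h‖ ≤ (1 / (2 * ρ) - L)⁻¹ * E := by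
      rw [show 1 / (2 * ρ) - L = (1 - 2 * ρ * L) / (2 * ρ) from by
          rw [eq_div_iff (by positivity : (2:ℝ) * ρ ≠ 0)]; field_simp,
        inv_div, div_mul_eq_mul_div, le_div_iff₀ (by linarith : (0:ℝ) < 1 - 2 * ρ * L)]
      linarith only [h8]
    linarith [hC5σ]
  · -- Case 2
    have KB := keyB hBspan hBunit hk hα hβ.le hβα Φ hRIPa hRIPb h
    set γ : ℝ := (β ^ 2 - α ^ 2) / (ρ ^ 2 * ((k : ℝ) - 1)) with hγdef
    have hγ0 : 0 ≤ γ := by positivity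
    have hγid : γ * (ρ ^ 2 * ((k : ℝ) - 1)) = β ^ 2 - α ^ 2 := by
      rw [hγdef]; field_simp
    have F1 : α ^ 2 * ((k : ℝ) - 1) * ‖h‖ ^ 2
        ≤ ((k : ℝ) - 1) * (nB * (2 * (lam * σ))) + (β ^ 2 - α ^ 2) * nB ^ 2 := by
      have := mul_le_mul_of_nonneg_left hΦh hkm1.le
      linarith [KB, this]
    have F1' : α ^ 2 * ((k : ℝ) - 1) * ‖h‖ ^ 2
        ≤ ((k : ℝ) - 1) * (nB * (2 * (lam * σ))) + γ * (ρ ^ 2 * ((k : ℝ) - 1)) * nB ^ 2 := by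
      rw [hγid]; exact F1
    have G1 : ρ ^ 2 * nB ^ 2 ≤ ‖h‖ ^ 2 := by
      have hms := mul_self_le_mul_self (mul_nonneg hρ0.le hnB0) hcase
      nlinarith only [hms]
    have T1 : ((k : ℝ) - 1) * (ρ * nB) * (2 * (lam * σ))
        ≤ ((k : ℝ) - 1) * ‖h‖ * (2 * (lam * σ)) := by
      have := mul_le_mul_of_nonneg_left hcase hkm1.le
      exact mul_le_mul_of_nonneg_right this (by positivity)
    have T2 : γ * ((k : ℝ) - 1) * ρ * (ρ ^ 2 * nB ^ 2) ≤ γ * ((k : ℝ) - 1) * ρ * ‖h‖ ^ 2 :=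
      mul_le_mul_of_nonneg_left G1 (by positivity)
    have Kmul : ((k : ℝ) - 1) * ((α ^ 2 - γ) * ρ * ‖h‖ ^ 2)
        ≤ ((k : ℝ) - 1) * (2 * lam * σ * ‖h‖) := by
      have F1ρ := mul_le_mul_of_nonneg_left F1' hρ0.le
      nlinarith only [F1ρ, T1, T2]
    have K' : (α ^ 2 - γ) * ρ * ‖h‖ ^ 2 ≤ 2 * lam * σ * ‖h‖ :=
      le_of_mul_le_mul_left Kmul hkm1
    rcases eq_or_lt_of_le (norm_nonneg h) with hh0 | hh0
    · have hEterm : 0 ≤ (1 / (2 * ρ) - L)⁻¹ * E :=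
        mul_nonneg (inv_nonneg.mpr hC4pos.le) hE0
      rw [← hh0]
      linarith [hC5σ]
    · have hpos2 : 0 < (α ^ 2 - γ) * ρ := mul_pos hαt hρ0
      have hfin : ‖h‖ * ((α ^ 2 - γ) * ρ) ≤ 2 * lam * σ := by
        apply le_of_mul_le_mul_right ?_ hh0
        nlinarith only [K']
      have h10 : ‖h‖ ≤ 2 * lam / ((α ^ 2 - γ) * ρ) * σ := by
        rw [div_mul_eq_mul_div, le_div_iff₀ hpos2]
        nlinarith only [hfin]
      have hEterm : 0 ≤ (1 / (2 * ρ) - L)⁻¹ * E :=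
        mul_nonneg (inv_nonneg.mpr hC4pos.le) hE0
      linarith [h10, hEterm]
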